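/- Let m ≥ 1 and let G^ξ: ℤ^m × S^{N-1} × S^{N-1} → ℝ be bounded functions, for ξ ∈ ℤ^m with |ξ| ≤ R, each 1-periodic in the first variable. Define for T > 0 and z in the closed unit ball of ℝ^N: g_T(z) = (1/T^m)·inf{ Σ_{|ξ|≤R} Σ_{β ∈ R₁^ξ(Q_T)} G^ξ(β, u(β), u(β+ξ)) : u: ℤ^m ∩ Q_T → S^{N-1}, (1/#(ℤ^m ∩ Q_T))·Σ_{α ∈ ℤ^m ∩ Q_T} u(α) = z }, where Q_T = (0,T)^m and R₁^ξ(Q_T) = {β ∈ ℤ^m ∩ Q_T : β, β+ξ ∈ Q_T}. Then for every z with |z| < 1 the limit G_hom(z) = lim_{T→∞} g_T(z) exists. -/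

import Mathlib

open Classical

/-- Lattice points of `ℤ^m` lying in the open cube `(0,T)^m`. -/
noncomputable def latticeCube (m : ℕ) (T : ℝ) : Finset (Fin m → ℤ) :=
  (Finset.Icc (fun _ => (0 : ℤ)) (fun _ => ⌈T⌉)).filter
    (fun β => ∀ j, (0 : ℝ) < (β j : ℝ) ∧ (β j : ℝ) < T)

/-- Interaction ranges `ξ ∈ ℤ^m` with Euclidean norm at most `R`. -/
noncomputable def rangeSet (m : ℕ) (R : ℝ) : Finset (Fin m → ℤ) :=
  (Finset.Icc (fun _ => -⌈R⌉) (fun _ => ⌈R⌉)).filter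
    (fun ξ => Real.sqrt (∑ j, ((ξ j : ℝ)) ^ 2) ≤ R)

/-- The discrete energy `E₁(u; Q_T)` of a spin field `u`. -/
noncomputable def latticeEnergy (m N : ℕ) (R : ℝ)
    (G : (Fin m → ℤ) → (Fin m → ℤ) → EuclideanSpace ℝ (Fin N) →
      EuclideanSpace ℝ (Fin N) → ℝ)
    (T : ℝ) (u : (Fin m → ℤ) → EuclideanSpace ℝ (Fin N)) : ℝ :=
  ∑ ξ ∈ rangeSet m R,
    ∑ β ∈ (latticeCube m T).filter (fun β => β + ξ ∈ latticeCube m T),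
      G ξ β (u β) (u (β + ξ))

/-- The normalized infimum `g_T(z)` with exact discrete average constraint. -/
noncomputable def gT (m N : ℕ) (R : ℝ)
    (G : (Fin m → ℤ) → (Fin m → ℤ) → EuclideanSpace ℝ (Fin N) →
      EuclideanSpace ℝ (Fin N) → ℝ)
    (T : ℝ) (z : EuclideanSpace ℝ (Fin N)) : ℝ :=
  (1 / T ^ m) * sInf { e : ℝ |
    ∃ u : (Fin m → ℤ) → EuclideanSpace ℝ (Fin N),
      (∀ β, ‖u β‖ = 1) ∧
      (((latticeCube m T).card : ℝ))⁻¹ • ∑ β ∈ latticeCube m T, u β = z ∧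
      e = latticeEnergy m N R G T u }


open Filter

lemma exists_unit_orthogonal {N : ℕ} (hN : 2 ≤ N) (w : EuclideanSpace ℝ (Fin N)) :
    ∃ s : EuclideanSpace ℝ (Fin N), ‖s‖ = 1 ∧ inner ℝ w s = (0 : ℝ) := by
  have hfr : Module.finrank ℝ (EuclideanSpace ℝ (Fin N)) = N := by
    simp [finrank_euclideanSpace]
  have hrank : 0 < Module.finrank ℝ ((ℝ ∙ w)ᗮ : Submodule ℝ (EuclideanSpace ℝ (Fin N))) := by
    have h1 : Module.finrank ℝ (ℝ ∙ w) ≤ 1 := by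
      rcases eq_or_ne w 0 with h | h
      · subst h
        rw [Submodule.span_zero_singleton]; simp
      · rw [finrank_span_singleton h]
    have h2 := Submodule.finrank_add_finrank_orthogonal (𝕜 := ℝ) (ℝ ∙ w)
    rw [hfr] at h2
    omega
  have hne : ((ℝ ∙ w)ᗮ : Submodule ℝ (EuclideanSpace ℝ (Fin N))) ≠ ⊥ := by
    intro h
    rw [h] at hrank
    simp at hrank
  obtain ⟨x, hxK, hx0⟩ := Submodule.exists_mem_ne_zero_of_ne_bot hne
  refine ⟨(‖x‖)⁻¹ • x, ?_, ?_⟩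
  · simp [norm_smul, norm_ne_zero_iff.mpr hx0, inv_mul_cancel₀]
  · have h0 : inner ℝ w x = (0:ℝ) := by
      have := (Submodule.mem_orthogonal (ℝ ∙ w) x).mp hxK w (Submodule.mem_span_singleton_self w)
      simpa [real_inner_comm] using this
    rw [inner_smul_right, h0, mul_zero]




lemma sphere_sum_two {N : ℕ} (hN : 2 ≤ N) (w : EuclideanSpace ℝ (Fin N)) (hw : ‖w‖ ≤ 2) :
    ∃ a b : EuclideanSpace ℝ (Fin N), ‖a‖ = 1 ∧ ‖b‖ = 1 ∧ a + b = w := by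
  obtain ⟨s, hs1, hs0⟩ := exists_unit_orthogonal hN w
  set t : ℝ := Real.sqrt (1 - ‖w‖ ^ 2 / 4) with ht
  have hnn : 0 ≤ 1 - ‖w‖ ^ 2 / 4 := by
    have h2 : ‖w‖ ^ 2 ≤ 4 := by nlinarith [norm_nonneg w]
    linarith
  have ht2 : t ^ 2 = 1 - ‖w‖ ^ 2 / 4 := Real.sq_sqrt hnn
  refine ⟨(1/2 : ℝ) • w + t • s, (1/2 : ℝ) • w - t • s, ?_, ?_, by module⟩
  · have horth : inner ℝ ((1/2 : ℝ) • w) (t • s) = (0:ℝ) := by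
      rw [inner_smul_left, inner_smul_right, hs0]; ring
    have := norm_add_sq_real ((1/2 : ℝ) • w) (t • s)
    rw [horth] at this
    have hns : ‖t • s‖ ^ 2 = t ^ 2 := by
      rw [norm_smul, hs1, mul_one, Real.norm_eq_abs, sq_abs]
    have hnw : ‖(1/2:ℝ) • w‖ ^ 2 = ‖w‖ ^ 2 / 4 := by
      rw [norm_smul, Real.norm_eq_abs, mul_pow, sq_abs]; ring
    have : ‖(1/2 : ℝ) • w + t • s‖ ^ 2 = 1 := by rw [this, hns, hnw, ht2]; ring
    nlinarith [norm_nonneg ((1/2 : ℝ) • w + t • s)]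
  · have horth : inner ℝ ((1/2 : ℝ) • w) (-(t • s)) = (0:ℝ) := by
      rw [inner_neg_right, inner_smul_left, inner_smul_right, hs0]; ring
    have := norm_add_sq_real ((1/2 : ℝ) • w) (-(t • s))
    rw [horth] at this
    have hns : ‖-(t • s)‖ ^ 2 = t ^ 2 := by
      rw [norm_neg, norm_smul, hs1, mul_one, Real.norm_eq_abs, sq_abs]
    have hnw : ‖(1/2:ℝ) • w‖ ^ 2 = ‖w‖ ^ 2 / 4 := by
      rw [norm_smul, Real.norm_eq_abs, mul_pow, sq_abs]; ring
    have h1 : ‖(1/2 : ℝ) • w + -(t • s)‖ ^ 2 = 1 := by rw [this, hns, hnw, ht2]; ring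
    rw [← sub_eq_add_neg] at h1
    nlinarith [norm_nonneg ((1/2 : ℝ) • w - t • s)]

lemma sphere_sum_nat {N : ℕ} (hN : 2 ≤ N) :
    ∀ n : ℕ, 2 ≤ n → ∀ w : EuclideanSpace ℝ (Fin N), ‖w‖ ≤ n →
    ∃ v : ℕ → EuclideanSpace ℝ (Fin N), (∀ i, ‖v i‖ = 1) ∧
      ∑ i ∈ Finset.range n, v i = w := by
  intro n hn
  induction n, hn using Nat.le_induction with
  | base =>
    intro w hw
    obtain ⟨a, b, ha, hb, hab⟩ := sphere_sum_two hN w (by exact_mod_cast hw)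
    refine ⟨fun i => if i = 0 then a else b, fun i => by dsimp only; split <;> assumption, ?_⟩
    rw [Finset.sum_range_succ, Finset.sum_range_one]
    simpa using hab
  | succ n hn ih =>
    intro w hw
    -- choose last vector
    obtain ⟨vl, hvl1, hrem⟩ : ∃ vl : EuclideanSpace ℝ (Fin N), ‖vl‖ = 1 ∧ ‖w - vl‖ ≤ n := by
      rcases le_or_gt ‖w‖ 1 with h | h
      · obtain ⟨s, hs1, -⟩ := exists_unit_orthogonal hN w
        refine ⟨s, hs1, ?_⟩
        have : ‖w - s‖ ≤ ‖w‖ + ‖s‖ := norm_sub_le _ _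
        have hn2 : (2:ℝ) ≤ (n:ℝ) := by exact_mod_cast hn
        linarith
      · refine ⟨(‖w‖)⁻¹ • w, ?_, ?_⟩
        · rw [norm_smul, norm_inv, norm_norm, inv_mul_cancel₀ (by positivity)]
        · have hww : w - (‖w‖)⁻¹ • w = (1 - (‖w‖)⁻¹) • w := by
            rw [sub_smul, one_smul]
          rw [hww, norm_smul, Real.norm_eq_abs]
          have h0 : (0:ℝ) < ‖w‖ := by linarith
          have : |1 - (‖w‖)⁻¹| = 1 - (‖w‖)⁻¹ := by
            rw [abs_of_nonneg]
            have : (‖w‖)⁻¹ ≤ 1 := by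
              rw [inv_le_one_iff₀]; right; linarith
            linarith
          rw [this]
          have hcast : ‖w‖ ≤ (n:ℝ) + 1 := by exact_mod_cast hw
          have : (1 - (‖w‖)⁻¹) * ‖w‖ = ‖w‖ - 1 := by field_simp
          rw [this]
          linarith
    obtain ⟨v, hv1, hsum⟩ := ih (w - vl) hrem
    refine ⟨fun i => if i = n then vl else v i, fun i => by dsimp only; split <;> [assumption; exact hv1 i], ?_⟩
    rw [Finset.sum_range_succ]
    have : ∑ i ∈ Finset.range n, (if i = n then vl else v i) = ∑ i ∈ Finset.range n, v i := by
      apply Finset.sum_congr rfl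
      intro i hi
      rw [if_neg (Finset.mem_range.mp hi).ne]
    rw [this, if_pos rfl, hsum]
    abel

lemma sphere_sum_finset {N : ℕ} (hN : 2 ≤ N) {ι : Type*} [DecidableEq ι] (s : Finset ι)
    (hs : 2 ≤ s.card) (w : EuclideanSpace ℝ (Fin N)) (hw : ‖w‖ ≤ (s.card : ℝ)) :
    ∃ v : ι → EuclideanSpace ℝ (Fin N), (∀ i, ‖v i‖ = 1) ∧ ∑ i ∈ s, v i = w := by
  obtain ⟨v0, hv01, hv0s⟩ := sphere_sum_nat hN s.card hs w hw
  refine ⟨fun i => if h : i ∈ s then v0 (s.equivFin ⟨i, h⟩) else v0 0,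
    fun i => by dsimp only; split <;> exact hv01 _, ?_⟩
  rw [← hv0s, ← Fin.sum_univ_eq_sum_range v0 s.card]
  rw [← Finset.sum_attach s (fun i => if h : i ∈ s then v0 (s.equivFin ⟨i, h⟩) else v0 0)]
  rw [← (s.equivFin).sum_comp (fun j => v0 j)]
  apply Finset.sum_congr rfl
  intro x _
  rw [dif_pos x.2]

-- ### integer-parameter reformulation

noncomputable def Cb (m : ℕ) (n : ℤ) : Finset (Fin m → ℤ) :=
  Finset.Icc (fun _ => (1:ℤ)) (fun _ => n - 1)

lemma mem_Cb {m : ℕ} {n : ℤ} {β : Fin m → ℤ} :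
    β ∈ Cb m n ↔ ∀ j, 1 ≤ β j ∧ β j ≤ n - 1 := by
  simp [Cb, Finset.mem_Icc, Pi.le_def, forall_and]

lemma card_Cb (m : ℕ) (n : ℤ) : (Cb m n).card = (n - 1).toNat ^ m := by
  rw [Cb, Pi.card_Icc]
  simp [Int.card_Icc]

lemma latticeCube_eq {m : ℕ} {T : ℝ} (hT : 0 < T) : latticeCube m T = Cb m ⌈T⌉ := by
  ext β
  simp only [latticeCube, Finset.mem_filter, Finset.mem_Icc, mem_Cb, Pi.le_def]
  constructor
  · rintro ⟨-, h⟩ j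
    obtain ⟨h1, h2⟩ := h j
    have h1' : 0 < β j := by exact_mod_cast h1
    have h2' : β j < ⌈T⌉ := Int.lt_ceil.mpr h2
    omega
  · intro h
    refine ⟨⟨fun j => by have := h j; omega, fun j => by have := h j; omega⟩, fun j => ?_⟩
    obtain ⟨h1, h2⟩ := h j
    constructor
    · exact_mod_cast h1
    · exact_mod_cast Int.lt_ceil.mp (by omega)

noncomputable def En (m N : ℕ) (R : ℝ)
    (G : (Fin m → ℤ) → (Fin m → ℤ) → EuclideanSpace ℝ (Fin N) →
      EuclideanSpace ℝ (Fin N) → ℝ)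
    (n : ℤ) (u : (Fin m → ℤ) → EuclideanSpace ℝ (Fin N)) : ℝ :=
  ∑ ξ ∈ rangeSet m R,
    ∑ β ∈ (Cb m n).filter (fun β => β + ξ ∈ Cb m n),
      G ξ β (u β) (u (β + ξ))

def ESet (m N : ℕ) (R : ℝ)
    (G : (Fin m → ℤ) → (Fin m → ℤ) → EuclideanSpace ℝ (Fin N) →
      EuclideanSpace ℝ (Fin N) → ℝ)
    (z : EuclideanSpace ℝ (Fin N)) (n : ℤ) : Set ℝ :=
  { e : ℝ | ∃ u : (Fin m → ℤ) → EuclideanSpace ℝ (Fin N),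
      (∀ β, ‖u β‖ = 1) ∧
      (((Cb m n).card : ℝ))⁻¹ • ∑ β ∈ Cb m n, u β = z ∧
      e = En m N R G n u }

noncomputable def hfun (m N : ℕ) (R : ℝ)
    (G : (Fin m → ℤ) → (Fin m → ℤ) → EuclideanSpace ℝ (Fin N) →
      EuclideanSpace ℝ (Fin N) → ℝ)
    (z : EuclideanSpace ℝ (Fin N)) (n : ℤ) : ℝ :=
  sInf (ESet m N R G z n)

lemma gT_eq (m N : ℕ) (R : ℝ) (G : (Fin m → ℤ) → (Fin m → ℤ) →
      EuclideanSpace ℝ (Fin N) → EuclideanSpace ℝ (Fin N) → ℝ)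
    (z : EuclideanSpace ℝ (Fin N)) {T : ℝ} (hT : 0 < T) :
    gT m N R G T z = (1 / T ^ m) * hfun m N R G z ⌈T⌉ := by
  have hc : latticeCube m T = Cb m ⌈T⌉ := latticeCube_eq hT
  have he : ∀ u, latticeEnergy m N R G T u = En m N R G ⌈T⌉ u := by
    intro u; rw [latticeEnergy, En, hc]
  rw [gT, hfun, ESet]
  congr 2
  ext e
  simp only [hc, he, Set.mem_setOf_eq]

section Main

variable {m N : ℕ} {R : ℝ}
  {G : (Fin m → ℤ) → (Fin m → ℤ) → EuclideanSpace ℝ (Fin N) → EuclideanSpace ℝ (Fin N) → ℝ}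
  {z : EuclideanSpace ℝ (Fin N)}

lemma En_abs_le {C : ℝ} (hC : ∀ ξ β u v, |G ξ β u v| ≤ C) (hC0 : 0 ≤ C) (n : ℤ)
    (u : (Fin m → ℤ) → EuclideanSpace ℝ (Fin N)) :
    |En m N R G n u| ≤ C * (rangeSet m R).card * (n - 1).toNat ^ m := by
  have hcard : ∀ ξ : Fin m → ℤ,
      (((Cb m n).filter (fun β => β + ξ ∈ Cb m n)).card : ℝ) ≤ ((n - 1).toNat ^ m : ℕ) := by
    intro ξ
    have := Finset.card_le_card (Finset.filter_subset (fun β => β + ξ ∈ Cb m n) (Cb m n))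
    rw [card_Cb] at this
    exact_mod_cast this
  calc |En m N R G n u|
      ≤ ∑ ξ ∈ rangeSet m R,
          |∑ β ∈ (Cb m n).filter (fun β => β + ξ ∈ Cb m n), G ξ β (u β) (u (β + ξ))| :=
        Finset.abs_sum_le_sum_abs _ _
    _ ≤ ∑ ξ ∈ rangeSet m R, C * ((n - 1).toNat ^ m : ℕ) := by
        apply Finset.sum_le_sum
        intro ξ _
        calc |∑ β ∈ (Cb m n).filter (fun β => β + ξ ∈ Cb m n), G ξ β (u β) (u (β + ξ))|
            ≤ ∑ β ∈ (Cb m n).filter (fun β => β + ξ ∈ Cb m n), |G ξ β (u β) (u (β + ξ))| :=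
              Finset.abs_sum_le_sum_abs _ _
          _ ≤ ((Cb m n).filter (fun β => β + ξ ∈ Cb m n)).card • C :=
              Finset.sum_le_card_nsmul _ _ C (fun x _ => hC _ _ _ _)
          _ = (((Cb m n).filter (fun β => β + ξ ∈ Cb m n)).card : ℝ) * C := by
              rw [nsmul_eq_mul]
          _ ≤ ((n - 1).toNat ^ m : ℕ) * C := by
              exact mul_le_mul_of_nonneg_right (hcard ξ) hC0
          _ = C * ((n - 1).toNat ^ m : ℕ) := mul_comm _ _
    _ = (rangeSet m R).card * (C * ((n - 1).toNat ^ m : ℕ)) := by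
        rw [Finset.sum_const, nsmul_eq_mul]
    _ = C * (rangeSet m R).card * (n - 1).toNat ^ m := by push_cast; ring

lemma ESet_abs_le {C : ℝ} (hC : ∀ ξ β u v, |G ξ β u v| ≤ C) (hC0 : 0 ≤ C) (n : ℤ)
    {e : ℝ} (he : e ∈ ESet m N R G z n) :
    |e| ≤ C * (rangeSet m R).card * (n - 1).toNat ^ m := by
  obtain ⟨u, -, -, rfl⟩ := he
  exact En_abs_le hC hC0 n u

lemma ESet_bddBelow {C : ℝ} (hC : ∀ ξ β u v, |G ξ β u v| ≤ C) (hC0 : 0 ≤ C) (n : ℤ) :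
    BddBelow (ESet m N R G z n) := by
  refine ⟨-(C * (rangeSet m R).card * (n - 1).toNat ^ m), fun e he => ?_⟩
  have := ESet_abs_le (z := z) hC hC0 n he
  exact neg_le_of_abs_le this

lemma abs_hfun_le {C : ℝ} (hC : ∀ ξ β u v, |G ξ β u v| ≤ C) (hC0 : 0 ≤ C) (n : ℤ) :
    |hfun m N R G z n| ≤ C * (rangeSet m R).card * (n - 1).toNat ^ m := by
  rcases Set.eq_empty_or_nonempty (ESet m N R G z n) with h | h
  · rw [hfun, h, Real.sInf_empty, abs_zero]
    positivity
  · rw [abs_le]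
    constructor
    · refine le_csInf h (fun e he => ?_)
      exact neg_le_of_abs_le (ESet_abs_le hC hC0 n he)
    · obtain ⟨e, he⟩ := h
      exact le_trans (csInf_le (ESet_bddBelow hC hC0 n) he)
        (le_of_abs_le (ESet_abs_le hC hC0 n he))

lemma norm_card_smul_le {c : ℕ} (hz : ‖z‖ ≤ 1) : ‖(c : ℝ) • z‖ ≤ (c : ℝ) := by
  rw [norm_smul, Real.norm_eq_abs, abs_of_nonneg (by positivity)]
  nlinarith [norm_nonneg z, (Nat.cast_nonneg c : (0:ℝ) ≤ c)]

lemma ESet_nonempty (hm : 1 ≤ m) (hN : 2 ≤ N) (hz : ‖z‖ ≤ 1) {n : ℤ} (hn : 3 ≤ n) :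
    (ESet m N R G z n).Nonempty := by
  have hcard : 2 ≤ (Cb m n).card := by
    rw [card_Cb]
    have h2 : 2 ≤ (n - 1).toNat := by omega
    calc 2 = 2 ^ 1 := rfl
      _ ≤ (n - 1).toNat ^ 1 := Nat.pow_le_pow_left h2 1
      _ ≤ (n - 1).toNat ^ m := Nat.pow_le_pow_right (by omega) hm
  obtain ⟨v, hv1, hvs⟩ := sphere_sum_finset hN (Cb m n) hcard (((Cb m n).card : ℝ) • z)
    (norm_card_smul_le hz)
  refine ⟨En m N R G n v, v, hv1, ?_, rfl⟩
  have hcne : ((Cb m n).card : ℝ) ≠ 0 := by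
    have : 0 < (Cb m n).card := by omega
    exact_mod_cast this.ne'
  rw [hvs, inv_smul_smul₀ hcne]

lemma mem_rangeSet_bounds {ξ : Fin m → ℤ} (hξ : ξ ∈ rangeSet m R) :
    ∀ j, -⌈R⌉ ≤ ξ j ∧ ξ j ≤ ⌈R⌉ := by
  have := (Finset.mem_filter.mp hξ).1
  rw [Finset.mem_Icc] at this
  intro j
  exact ⟨this.1 j, this.2 j⟩

lemma key_ineq (hm : 1 ≤ m) (hN : 2 ≤ N) (hR : 0 < R) (hz : ‖z‖ < 1)
    {C : ℝ} (hC : ∀ ξ β u v, |G ξ β u v| ≤ C) (hC0 : 0 ≤ C)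
    (hGper : ∀ ξ β γ u v, G ξ (β + γ) u v = G ξ β u v)
    {k n : ℤ} (hk : 2 * ⌈R⌉ + 3 ≤ k) (hn : 2 * k + 1 ≤ n) :
    hfun m N R G z n ≤ (((n / k).toNat ^ m : ℕ) : ℝ) * hfun m N R G z k
      + C * (rangeSet m R).card *
        ((((n - 1).toNat ^ m : ℕ) : ℝ) -
          (((n / k).toNat ^ m : ℕ) : ℝ) * (((k - 1 - 2 * ⌈R⌉).toNat ^ m : ℕ) : ℝ)) := by
  have hr : 1 ≤ ⌈R⌉ := Int.ceil_pos.mpr hR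
  set r : ℤ := ⌈R⌉ with hrdef
  have hk3 : 3 ≤ k := by omega
  have hkpos : (0:ℤ) < k := by omega
  set q' : ℤ := n / k with hq'def
  have hq'2 : 2 ≤ q' := (Int.le_ediv_iff_mul_le hkpos).mpr (by omega)
  have hkq : k * q' ≤ n := by
    rw [mul_comm]
    exact Int.ediv_mul_le n hkpos.ne'
  -- the tiling
  set A : Finset (Fin m → ℤ) := Finset.Icc (fun _ => (0:ℤ)) (fun _ => q' - 1) with hAdef
  set φ : (Fin m → ℤ) × (Fin m → ℤ) → (Fin m → ℤ) := fun p => k • p.1 + p.2 with hφdef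
  have hφ_apply : ∀ a b (j : Fin m), φ (a, b) j = k * a j + b j := by
    intro a b j
    simp [hφdef, mul_comm]
  have hmemA : ∀ a : Fin m → ℤ, a ∈ A ↔ ∀ j, 0 ≤ a j ∧ a j ≤ q' - 1 := by
    intro a
    simp [hAdef, Finset.mem_Icc, Pi.le_def, forall_and]
  have hφCb : ∀ a ∈ A, ∀ b ∈ Cb m k, φ (a, b) ∈ Cb m n := by
    intro a ha b hb
    rw [mem_Cb]
    intro j
    obtain ⟨ha1, ha2⟩ := (hmemA a).mp ha j
    obtain ⟨hb1, hb2⟩ := mem_Cb.mp hb j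
    rw [hφ_apply]
    have h1 : 0 ≤ k * a j := mul_nonneg hkpos.le ha1
    have h2 : k * a j ≤ k * (q' - 1) := mul_le_mul_of_nonneg_left ha2 hkpos.le
    have h3 : k * (q' - 1) = k * q' - k := by ring
    omega
  have hsec : ∀ (a b : Fin m → ℤ), (∀ j, 1 ≤ b j ∧ b j ≤ k) →
      ∀ j, φ (a, b) j - k * ((φ (a, b) j - 1) / k) = b j := by
    intro a b hb j
    obtain ⟨hb1, hb2⟩ := hb j
    have h1 : (φ (a, b) j - 1) / k = a j := by
      rw [hφ_apply]
      have h : k * a j + b j - 1 = (b j - 1) + k * (a j) := by ring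
      rw [h, Int.add_mul_ediv_left _ _ hkpos.ne',
        Int.ediv_eq_zero_of_lt (by omega) (by omega), zero_add]
    rw [h1, hφ_apply]
    ring
  have hinj : ∀ x ∈ A ×ˢ Cb m k, ∀ y ∈ A ×ˢ Cb m k, φ x = φ y → x = y := by
    rintro ⟨a, b⟩ hx ⟨a', b'⟩ hy heq
    obtain ⟨hxA, hxC⟩ := Finset.mem_product.mp hx
    obtain ⟨hyA, hyC⟩ := Finset.mem_product.mp hy
    have hxC' : b ∈ Cb m k := hxC
    have hyC' : b' ∈ Cb m k := hyC
    have hbb : b = b' := by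
      funext j
      have e1 := hsec a b (fun j => by have := mem_Cb.mp hxC' j; omega) j
      have e2 := hsec a' b' (fun j => by have := mem_Cb.mp hyC' j; omega) j
      rw [heq] at e1
      rw [← e1, ← e2]
    have haa : a = a' := by
      funext j
      have := congrFun heq j
      rw [hφ_apply, hφ_apply, hbb] at this
      have := add_right_cancel this
      exact mul_left_cancel₀ hkpos.ne' this
    rw [haa, hbb]
  set copyU : Finset (Fin m → ℤ) := (A ×ˢ Cb m k).image φ with hcopyUdef
  have hCU_sub : copyU ⊆ Cb m n := by
    intro β hβ
    obtain ⟨⟨a, b⟩, hp, rfl⟩ := Finset.mem_image.mp hβ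
    obtain ⟨ha, hb⟩ := Finset.mem_product.mp hp
    exact hφCb a ha b hb
  have hcardA : A.card = (q'.toNat) ^ m := by
    rw [hAdef, Pi.card_Icc]
    simp [Int.card_Icc]
  have hcardCU : copyU.card = q'.toNat ^ m * (k - 1).toNat ^ m := by
    rw [hcopyUdef, Finset.card_image_of_injOn (fun x hx y hy => hinj x hx y hy),
      Finset.card_product, hcardA, card_Cb]
  -- leftover sites
  set leftover : Finset (Fin m → ℤ) := Cb m n \ copyU with hleftdef
  have hcardCbn : (Cb m n).card = (n - 1).toNat ^ m := card_Cb m n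
  have hcardL : leftover.card = (Cb m n).card - copyU.card :=
    Finset.card_sdiff_of_subset hCU_sub
  have hj0 : 0 < m := hm
  set j0 : Fin m := ⟨0, hj0⟩ with hj0def
  have hβt_mem : ∀ t : ℤ, 1 ≤ t → t ≤ 2 →
      (fun j => if j = j0 then t * k else 1) ∈ Cb m n := by
    intro t ht1 ht2
    rw [mem_Cb]
    intro j
    by_cases hj : j = j0
    · simp only [hj, if_pos rfl]
      have h1 : 1 * k ≤ t * k := mul_le_mul_of_nonneg_right ht1 hkpos.le
      have h2 : t * k ≤ 2 * k := mul_le_mul_of_nonneg_right ht2 hkpos.le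
      omega
    · simp only [if_neg hj]
      omega
  have hβt_not : ∀ t : ℤ, 1 ≤ t →
      (fun j => if j = j0 then t * k else 1) ∉ copyU := by
    intro t ht hmem
    obtain ⟨⟨a, b⟩, hp, heq⟩ := Finset.mem_image.mp hmem
    obtain ⟨ha, hb⟩ := Finset.mem_product.mp hp
    have ha' : a ∈ A := ha
    have hb' : b ∈ Cb m k := hb
    have h0 : k * a j0 + b j0 = t * k := by
      have h00 := congrFun heq j0
      rw [hφ_apply] at h00
      simpa using h00
    obtain ⟨ha1, -⟩ := (hmemA a).mp ha' j0
    obtain ⟨hb1, hb2⟩ := mem_Cb.mp hb' j0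
    have hd : b j0 = k * (t - a j0) := by
      have : k * (t - a j0) = t * k - k * a j0 := by ring
      omega
    rcases le_or_gt (t - a j0) 0 with hle | hlt
    · have : k * (t - a j0) ≤ 0 := mul_nonpos_of_nonneg_of_nonpos hkpos.le hle
      omega
    · have h1 : (1:ℤ) ≤ t - a j0 := hlt
      have : k * 1 ≤ k * (t - a j0) := mul_le_mul_of_nonneg_left h1 hkpos.le
      omega
  have hpairne : (fun j => if j = j0 then 1 * k else 1 : Fin m → ℤ) ≠
      (fun j => if j = j0 then 2 * k else 1) := by
    intro h
    have h2 : (1 * k : ℤ) = 2 * k := by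
      have := congrFun h j0
      simpa using this
    omega
  have hlc : 2 ≤ leftover.card := by
    have hsub : ({(fun j => if j = j0 then 1 * k else 1),
        (fun j => if j = j0 then 2 * k else 1)} : Finset (Fin m → ℤ)) ⊆ leftover := by
      intro x hx
      rw [hleftdef, Finset.mem_sdiff]
      rcases Finset.mem_insert.mp hx with h | h
      · subst h
        exact ⟨hβt_mem 1 le_rfl one_le_two, hβt_not 1 le_rfl⟩
      · rw [Finset.mem_singleton] at h
        subst h
        exact ⟨hβt_mem 2 one_le_two le_rfl, hβt_not 2 one_le_two⟩
    calc 2 = ({(fun j => if j = j0 then 1 * k else 1),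
        (fun j => if j = j0 then 2 * k else 1)} : Finset (Fin m → ℤ)).card :=
          (Finset.card_pair hpairne).symm
      _ ≤ leftover.card := Finset.card_le_card hsub
  -- near-minimizer on the k-cube and the glued field
  set q : ℕ := q'.toNat ^ m with hqdef
  have hq1 : 1 ≤ q := Nat.one_le_pow _ _ (by omega)
  have hqR : (0:ℝ) < (q:ℝ) := by exact_mod_cast hq1
  refine le_of_forall_pos_le_add (fun ε hε => ?_)
  have hδ : (0:ℝ) < ε / q := div_pos hε hqR
  obtain ⟨e, heme, helt⟩ := Real.lt_sInf_add_pos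
    (ESet_nonempty (G := G) hm hN hz.le (show (3:ℤ) ≤ k by omega)) hδ
  obtain ⟨uk, huk1, hukavg, rfl⟩ := heme
  obtain ⟨v, hv1, hvsum⟩ := sphere_sum_finset hN leftover hlc
    ((leftover.card : ℝ) • z) (norm_card_smul_le hz.le)
  set u : (Fin m → ℤ) → EuclideanSpace ℝ (Fin N) :=
    fun β => if β ∈ copyU then uk (fun j => β j - k * ((β j - 1) / k)) else v β with hudef
  have hu1 : ∀ β, ‖u β‖ = 1 := by
    intro β
    simp only [hudef]
    split
    · exact huk1 _
    · exact hv1 _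
  have hu_copy : ∀ a ∈ A, ∀ b ∈ Cb m k, u (φ (a, b)) = uk b := by
    intro a ha b hb
    have hmem : φ (a, b) ∈ copyU :=
      Finset.mem_image.mpr ⟨(a, b), Finset.mem_product.mpr ⟨ha, hb⟩, rfl⟩
    simp only [hudef, if_pos hmem]
    have hρ : (fun j => φ (a, b) j - k * ((φ (a, b) j - 1) / k)) = b := by
      funext j
      exact hsec a b (fun i => by have := mem_Cb.mp hb i; omega) j
    rw [hρ]
  -- the average constraint
  have hck0 : ((Cb m k).card : ℝ) ≠ 0 := by
    rw [card_Cb]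
    exact Nat.cast_ne_zero.mpr (pow_ne_zero _ (by omega))
  have hSk : ∑ b ∈ Cb m k, uk b = ((Cb m k).card : ℝ) • z := by
    calc ∑ b ∈ Cb m k, uk b
        = ((Cb m k).card : ℝ) • (((Cb m k).card : ℝ)⁻¹ • ∑ b ∈ Cb m k, uk b) :=
          (smul_inv_smul₀ hck0 _).symm
      _ = ((Cb m k).card : ℝ) • z := by rw [hukavg]
  have hsum_copy : ∑ β ∈ copyU, u β = (q : ℝ) • (((Cb m k).card : ℝ) • z) := by
    rw [hcopyUdef, Finset.sum_image hinj, Finset.sum_product]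
    calc ∑ a ∈ A, ∑ b ∈ Cb m k, u (φ (a, b))
        = ∑ a ∈ A, ∑ b ∈ Cb m k, uk b :=
          Finset.sum_congr rfl fun a ha =>
            Finset.sum_congr rfl fun b hb => hu_copy a ha b hb
      _ = A.card • ∑ b ∈ Cb m k, uk b := Finset.sum_const _
      _ = (q : ℝ) • (((Cb m k).card : ℝ) • z) := by
          rw [hcardA, hSk, Nat.cast_smul_eq_nsmul ℝ q]
  have hsum_left : ∑ β ∈ leftover, u β = ((leftover.card : ℕ) : ℝ) • z := by
    rw [← hvsum]
    apply Finset.sum_congr rfl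
    intro β hβ
    have hnot : β ∉ copyU := (Finset.mem_sdiff.mp hβ).2
    simp only [hudef, if_neg hnot]
  have hcn0 : ((Cb m n).card : ℝ) ≠ 0 := by
    rw [card_Cb]
    exact Nat.cast_ne_zero.mpr (pow_ne_zero _ (by omega))
  have havg : (((Cb m n).card : ℝ))⁻¹ • ∑ β ∈ Cb m n, u β = z := by
    have hsplit : ∑ β ∈ Cb m n, u β = ∑ β ∈ leftover, u β + ∑ β ∈ copyU, u β :=
      (Finset.sum_sdiff hCU_sub).symm
    have h1 : copyU.card = q * (Cb m k).card := by
      rw [hcardCU, card_Cb, hqdef]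
    have h2 : copyU.card ≤ (Cb m n).card := Finset.card_le_card hCU_sub
    have hcoef : ((leftover.card : ℕ) : ℝ) + (q : ℝ) * ((Cb m k).card : ℝ)
        = ((Cb m n).card : ℝ) := by
      rw [hcardL, Nat.cast_sub h2, h1]
      push_cast
      ring
    rw [hsplit, hsum_left, hsum_copy, smul_smul, ← add_smul, hcoef]
    exact inv_smul_smul₀ hcn0 z
  -- the energy estimate
  set M : ℝ := ((rangeSet m R).card : ℝ) with hMdef
  set an : ℝ := (((n - 1).toNat ^ m : ℕ) : ℝ) with handef
  set ck : ℝ := (((k - 1 - 2 * r).toNat ^ m : ℕ) : ℝ) with hckdef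
  have hξbound : ∀ ξ ∈ rangeSet m R,
      ∑ β ∈ (Cb m n).filter (fun β => β + ξ ∈ Cb m n), G ξ β (u β) (u (β + ξ))
        ≤ (q : ℝ) * (∑ b ∈ (Cb m k).filter (fun b => b + ξ ∈ Cb m k),
            G ξ b (uk b) (uk (b + ξ)))
          + C * (an - (q : ℝ) * ck) := by
    intro ξ hξmem
    have hξbd := mem_rangeSet_bounds hξmem
    set Pn := (Cb m n).filter (fun β => β + ξ ∈ Cb m n) with hPndef
    set Pk := (Cb m k).filter (fun b => b + ξ ∈ Cb m k) with hPkdef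
    set D := (A ×ˢ Pk).image φ with hDdef
    have hsubAP : A ×ˢ Pk ⊆ A ×ˢ Cb m k :=
      Finset.product_subset_product_right (Finset.filter_subset _ _)
    have hφshift : ∀ (a b : Fin m → ℤ), φ (a, b) + ξ = φ (a, b + ξ) := by
      intro a b
      funext j
      simp only [hφdef, Pi.add_apply, Pi.smul_apply, smul_eq_mul]
      ring
    have hDsub : D ⊆ Pn := by
      intro β hβ
      obtain ⟨⟨a, b⟩, hp, rfl⟩ := Finset.mem_image.mp hβ
      obtain ⟨ha, hb⟩ := Finset.mem_product.mp hp
      have ha' : a ∈ A := ha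
      have hb' : b ∈ Pk := hb
      obtain ⟨hb1, hb2⟩ := Finset.mem_filter.mp hb'
      rw [hPndef, Finset.mem_filter]
      refine ⟨hφCb a ha' b hb1, ?_⟩
      rw [hφshift]
      exact hφCb a ha' (b + ξ) hb2
    have hsumD : ∑ β ∈ D, G ξ β (u β) (u (β + ξ))
        = (q : ℝ) * ∑ b ∈ Pk, G ξ b (uk b) (uk (b + ξ)) := by
      rw [hDdef, Finset.sum_image (fun x hx y hy h => hinj x (hsubAP hx) y (hsubAP hy) h),
        Finset.sum_product]
      have hterm : ∀ a ∈ A, ∀ b ∈ Pk,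
          G ξ (φ (a, b)) (u (φ (a, b))) (u (φ (a, b) + ξ)) = G ξ b (uk b) (uk (b + ξ)) := by
        intro a ha b hb
        obtain ⟨hb1, hb2⟩ := Finset.mem_filter.mp hb
        have h1 : u (φ (a, b)) = uk b := hu_copy a ha b hb1
        have h2 : u (φ (a, b) + ξ) = uk (b + ξ) := by
          rw [hφshift]
          exact hu_copy a ha (b + ξ) hb2
        have h3 : φ (a, b) = b + k • a := by
          funext j
          simp only [hφdef, Pi.add_apply, Pi.smul_apply, smul_eq_mul]
          ring
        rw [h1, h2, h3, hGper]
      calc ∑ a ∈ A, ∑ b ∈ Pk, G ξ (φ (a, b)) (u (φ (a, b))) (u (φ (a, b) + ξ))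
          = ∑ a ∈ A, ∑ b ∈ Pk, G ξ b (uk b) (uk (b + ξ)) :=
            Finset.sum_congr rfl fun a ha =>
              Finset.sum_congr rfl fun b hb => hterm a ha b hb
        _ = A.card • ∑ b ∈ Pk, G ξ b (uk b) (uk (b + ξ)) := Finset.sum_const _
        _ = (q : ℝ) * ∑ b ∈ Pk, G ξ b (uk b) (uk (b + ξ)) := by
            rw [hcardA, nsmul_eq_mul]
    have hcardD : D.card = q * Pk.card := by
      rw [hDdef, Finset.card_image_of_injOn
        (fun x hx y hy h => hinj x (hsubAP (Finset.mem_coe.mp hx)) y (hsubAP (Finset.mem_coe.mp hy)) h),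
        Finset.card_product, hcardA]
    have hPn_le : (Pn.card : ℝ) ≤ an := by
      have h := Finset.card_le_card (Finset.filter_subset (fun β => β + ξ ∈ Cb m n) (Cb m n))
      rw [card_Cb] at h
      rw [handef]
      exact_mod_cast h
    have hPk_ge : ck ≤ (Pk.card : ℝ) := by
      have hsub2 : Finset.Icc (fun _ => 1 + r) (fun _ => (k - 1 - r : ℤ)) ⊆ Pk := by
        intro b hb
        rw [Finset.mem_Icc] at hb
        obtain ⟨hb1, hb2⟩ := hb
        rw [hPkdef, Finset.mem_filter, mem_Cb, mem_Cb]
        constructor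
        · intro j
          have h1 : 1 + r ≤ b j := hb1 j
          have h2 : b j ≤ k - 1 - r := hb2 j
          omega
        · intro j
          have h1 : 1 + r ≤ b j := hb1 j
          have h2 : b j ≤ k - 1 - r := hb2 j
          have h3 := hξbd j
          have h4 : (b + ξ) j = b j + ξ j := rfl
          omega
      have hccc : (Finset.Icc (fun _ => 1 + r) (fun _ => (k - 1 - r : ℤ)) :
          Finset (Fin m → ℤ)).card = (k - 1 - 2 * r).toNat ^ m := by
        simp only [Pi.card_Icc, Int.card_Icc, Finset.prod_const, Finset.card_univ,
          Fintype.card_fin]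
        have hcoe : k - 1 - r + 1 - (1 + r) = k - 1 - 2 * r := by ring
        rw [hcoe]
      have h := Finset.card_le_card hsub2
      rw [hccc] at h
      rw [hckdef]
      exact_mod_cast h
    have hcardsdiff : (((Pn \ D).card : ℕ) : ℝ) ≤ an - (q : ℝ) * ck := by
      have h1 : (Pn \ D).card = Pn.card - D.card := Finset.card_sdiff_of_subset hDsub
      have h2 : D.card ≤ Pn.card := Finset.card_le_card hDsub
      rw [h1, Nat.cast_sub h2, hcardD]
      push_cast
      have h3 : (q : ℝ) * ck ≤ (q : ℝ) * (Pk.card : ℝ) :=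
        mul_le_mul_of_nonneg_left hPk_ge (by positivity)
      linarith
    have hrest : ∑ β ∈ Pn \ D, G ξ β (u β) (u (β + ξ)) ≤ C * (an - (q : ℝ) * ck) := by
      calc ∑ β ∈ Pn \ D, G ξ β (u β) (u (β + ξ))
          ≤ (Pn \ D).card • C :=
            Finset.sum_le_card_nsmul _ _ _ (fun x _ => le_of_abs_le (hC _ _ _ _))
        _ = (((Pn \ D).card : ℕ) : ℝ) * C := nsmul_eq_mul _ _
        _ ≤ (an - (q : ℝ) * ck) * C := mul_le_mul_of_nonneg_right hcardsdiff hC0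
        _ = C * (an - (q : ℝ) * ck) := mul_comm _ _
    calc ∑ β ∈ Pn, G ξ β (u β) (u (β + ξ))
        = ∑ β ∈ Pn \ D, G ξ β (u β) (u (β + ξ)) + ∑ β ∈ D, G ξ β (u β) (u (β + ξ)) :=
          (Finset.sum_sdiff hDsub).symm
      _ ≤ C * (an - (q : ℝ) * ck) + (q : ℝ) * ∑ b ∈ Pk, G ξ b (uk b) (uk (b + ξ)) :=
          add_le_add hrest (le_of_eq hsumD)
      _ = (q : ℝ) * ∑ b ∈ Pk, G ξ b (uk b) (uk (b + ξ)) + C * (an - (q : ℝ) * ck) := by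
          ring
  have hEn_le : En m N R G n u ≤ (q : ℝ) * En m N R G k uk + C * M * (an - (q : ℝ) * ck) := by
    rw [En, En]
    calc ∑ ξ ∈ rangeSet m R, ∑ β ∈ (Cb m n).filter (fun β => β + ξ ∈ Cb m n),
          G ξ β (u β) (u (β + ξ))
        ≤ ∑ ξ ∈ rangeSet m R, ((q : ℝ) * (∑ b ∈ (Cb m k).filter (fun b => b + ξ ∈ Cb m k),
            G ξ b (uk b) (uk (b + ξ))) + C * (an - (q : ℝ) * ck)) :=
          Finset.sum_le_sum hξbound
      _ = (q : ℝ) * (∑ ξ ∈ rangeSet m R, ∑ b ∈ (Cb m k).filter (fun b => b + ξ ∈ Cb m k),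
            G ξ b (uk b) (uk (b + ξ))) + C * M * (an - (q : ℝ) * ck) := by
          rw [Finset.sum_add_distrib, ← Finset.mul_sum, Finset.sum_const, nsmul_eq_mul, hMdef]
          ring
  have hmemn : En m N R G n u ∈ ESet m N R G z n := ⟨u, hu1, havg, rfl⟩
  have hle1 : hfun m N R G z n ≤ En m N R G n u :=
    csInf_le (ESet_bddBelow hC hC0 n) hmemn
  have hfinal : (q : ℝ) * En m N R G k uk ≤ (q : ℝ) * hfun m N R G z k + ε := by
    have h := mul_le_mul_of_nonneg_left helt.le hqR.le
    have hq0 : (q : ℝ) ≠ 0 := hqR.ne'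
    have heq : (q : ℝ) * (hfun m N R G z k + ε / q) = (q : ℝ) * hfun m N R G z k + ε := by
      field_simp
    have hfk : sInf (ESet m N R G z k) = hfun m N R G z k := rfl
    rw [hfk] at h
    linarith
  calc hfun m N R G z n ≤ En m N R G n u := hle1
    _ ≤ (q : ℝ) * En m N R G k uk + C * M * (an - (q : ℝ) * ck) := hEn_le
    _ ≤ (q : ℝ) * hfun m N R G z k + ε + C * M * (an - (q : ℝ) * ck) := by linarith
    _ = (q : ℝ) * hfun m N R G z k + C * M * (an - (q : ℝ) * ck) + ε := by ring


lemma tendsto_inv_int : Tendsto (fun n : ℤ => ((n : ℝ))⁻¹) atTop (nhds 0) :=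
  tendsto_inv_atTop_zero.comp tendsto_intCast_atTop_atTop

lemma tendsto_ediv_ratio {k : ℤ} (hk : 0 < k) :
    Tendsto (fun n : ℤ => (((n / k).toNat : ℝ)) / (n : ℝ)) atTop (nhds (1 / (k : ℝ))) := by
  have hkR : (0:ℝ) < (k:ℝ) := by exact_mod_cast hk
  have hlow : Tendsto (fun n : ℤ => 1 / (k:ℝ) - ((n:ℝ))⁻¹) atTop (nhds (1 / (k:ℝ))) := by
    have := (tendsto_const_nhds (x := 1 / (k:ℝ)) (f := (atTop : Filter ℤ))).sub tendsto_inv_int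
    simpa using this
  refine tendsto_of_tendsto_of_tendsto_of_le_of_le' hlow tendsto_const_nhds ?_ ?_
  · filter_upwards [eventually_ge_atTop (1 : ℤ)] with n hn
    have hn0 : (0:ℝ) < (n:ℝ) := by exact_mod_cast hn
    have hq0 : 0 ≤ n / k := Int.ediv_nonneg (by omega) hk.le
    have hcast : (((n / k).toNat : ℝ)) = ((n / k : ℤ) : ℝ) := by
      exact_mod_cast Int.toNat_of_nonneg hq0
    have hbound : (n:ℝ) / (k:ℝ) - 1 ≤ ((n / k : ℤ) : ℝ) := by
      have h1 : k * (n / k) + n % k = n := Int.mul_ediv_add_emod n k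
      have h2 : n % k < k := Int.emod_lt_of_pos n hk
      have h3 : (n:ℝ) < (k:ℝ) * ((n / k : ℤ) : ℝ) + (k:ℝ) := by
        have h4 : n < k * (n / k) + k := by omega
        exact_mod_cast h4
      rw [sub_le_iff_le_add, div_le_iff₀ hkR]
      nlinarith
    have heq : 1/(k:ℝ) - ((n:ℝ))⁻¹ = ((n:ℝ)/(k:ℝ) - 1)/(n:ℝ) := by
      field_simp
    rw [heq, hcast]
    gcongr
  · filter_upwards [eventually_ge_atTop (1 : ℤ)] with n hn
    have hn0 : (0:ℝ) < (n:ℝ) := by exact_mod_cast hn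
    have hq0 : 0 ≤ n / k := Int.ediv_nonneg (by omega) hk.le
    have hcast : (((n / k).toNat : ℝ)) = ((n / k : ℤ) : ℝ) := by
      exact_mod_cast Int.toNat_of_nonneg hq0
    rw [hcast, div_le_div_iff₀ hn0 hkR, one_mul]
    have h1 : (n / k) * k ≤ n := Int.ediv_mul_le n hk.ne'
    calc ((n / k : ℤ) : ℝ) * (k:ℝ) = (((n / k) * k : ℤ) : ℝ) := by push_cast; ring
      _ ≤ (n:ℝ) := by exact_mod_cast h1

lemma tendsto_sub_one_ratio :
    Tendsto (fun n : ℤ => (((n - 1).toNat : ℝ)) / (n : ℝ)) atTop (nhds 1) := by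
  have hlim : Tendsto (fun n : ℤ => 1 - ((n:ℝ))⁻¹) atTop (nhds 1) := by
    have := (tendsto_const_nhds (x := (1:ℝ)) (f := (atTop : Filter ℤ))).sub tendsto_inv_int
    simpa using this
  apply hlim.congr'
  filter_upwards [eventually_ge_atTop (1 : ℤ)] with n hn
  have hn0 : (0:ℝ) < (n:ℝ) := by exact_mod_cast hn
  have hcast : (((n - 1).toNat : ℝ)) = ((n : ℝ) - 1) := by
    have h2 : ((n - 1).toNat : ℤ) = n - 1 := Int.toNat_of_nonneg (by omega)
    exact_mod_cast h2
  rw [hcast]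
  field_simp

lemma tendsto_sub_ratio (c : ℤ) :
    Tendsto (fun n : ℤ => (((n - c).toNat : ℝ)) / (n : ℝ)) atTop (nhds 1) := by
  have hlim : Tendsto (fun n : ℤ => 1 - (c:ℝ) * ((n:ℝ))⁻¹) atTop (nhds 1) := by
    have h2 := (tendsto_const_nhds (x := (1:ℝ)) (f := (atTop : Filter ℤ))).sub
      (tendsto_inv_int.const_mul (c:ℝ))
    simpa using h2
  apply hlim.congr'
  filter_upwards [eventually_ge_atTop (max 1 c)] with n hn
  have hn1 : (1:ℤ) ≤ n := le_trans (le_max_left _ _) hn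
  have hnc : c ≤ n := le_trans (le_max_right _ _) hn
  have hn0 : (0:ℝ) < (n:ℝ) := by exact_mod_cast hn1
  have hcast : (((n - c).toNat : ℝ)) = ((n : ℝ) - (c:ℝ)) := by
    have h2 : ((n - c).toNat : ℤ) = n - c := Int.toNat_of_nonneg (by omega)
    exact_mod_cast h2
  rw [hcast]
  field_simp

lemma seq_tendsto (hm : 1 ≤ m) (hN : 2 ≤ N) (hR : 0 < R) (hz : ‖z‖ < 1)
    {C : ℝ} (hC : ∀ ξ β u v, |G ξ β u v| ≤ C) (hC0 : 0 ≤ C)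
    (hGper : ∀ ξ β γ u v, G ξ (β + γ) u v = G ξ β u v) :
    ∃ L : ℝ, Tendsto (fun n : ℤ => hfun m N R G z n / (n : ℝ) ^ m) atTop (nhds L) := by
  set B : ℝ := C * ((rangeSet m R).card : ℝ) with hBdef
  have hB0 : 0 ≤ B := mul_nonneg hC0 (Nat.cast_nonneg _)
  set f : ℤ → ℝ := fun n => hfun m N R G z n / (n : ℝ) ^ m with hfdef
  have hbound : ∀ᶠ n in (atTop : Filter ℤ), |f n| ≤ B := by
    filter_upwards [eventually_ge_atTop (1 : ℤ)] with n hn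
    have hn0 : (0:ℝ) < (n:ℝ) := by exact_mod_cast hn
    have hnm : (0:ℝ) < (n:ℝ) ^ m := pow_pos hn0 m
    have h1 := abs_hfun_le (R := R) (G := G) (z := z) hC hC0 n
    have h2 : C * ((rangeSet m R).card : ℝ) * (((n - 1).toNat : ℝ) ^ m) ≤ B * (n:ℝ)^m := by
      have hc : (((n-1).toNat : ℝ)) ≤ (n:ℝ) := by
        have h3 : ((n - 1).toNat : ℤ) = n - 1 := Int.toNat_of_nonneg (by omega)
        have h4 : (((n-1).toNat : ℤ) : ℝ) = ((n:ℝ) - 1) := by exact_mod_cast h3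
        push_cast at h4
        linarith
      have h5 : (((n-1).toNat : ℝ))^m ≤ (n:ℝ)^m :=
        pow_le_pow_left₀ (Nat.cast_nonneg _) hc m
      rw [hBdef]
      exact mul_le_mul_of_nonneg_left h5 hB0
    rw [hfdef]
    dsimp only
    rw [abs_div, abs_of_pos hnm, div_le_iff₀ hnm]
    calc |hfun m N R G z n| ≤ C * ((rangeSet m R).card : ℝ) * (((n - 1).toNat ^ m : ℕ) : ℝ) := by
          exact_mod_cast h1
      _ = C * ((rangeSet m R).card : ℝ) * (((n - 1).toNat : ℝ) ^ m) := by push_cast; ring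
      _ ≤ B * (n:ℝ)^m := h2
  have hbdd_le : IsBoundedUnder (· ≤ ·) (atTop : Filter ℤ) f :=
    isBoundedUnder_of_eventually_le (hbound.mono fun n h => (abs_le.mp h).2)
  have hbdd_ge : IsBoundedUnder (· ≥ ·) (atTop : Filter ℤ) f :=
    isBoundedUnder_of_eventually_ge (hbound.mono fun n h => (abs_le.mp h).1)
  have hcob_ge : IsCoboundedUnder (· ≥ ·) (atTop : Filter ℤ) f :=
    hbdd_le.isCoboundedUnder_ge
  have hcob_le : IsCoboundedUnder (· ≤ ·) (atTop : Filter ℤ) f :=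
    hbdd_ge.isCoboundedUnder_le
  set L : ℝ := liminf f atTop with hLdef
  have hlimsup_le_L : limsup f atTop ≤ L := by
    apply le_of_forall_pos_le_add
    intro ε hε
    have hr : 1 ≤ ⌈R⌉ := Int.ceil_pos.mpr hR
    set r : ℤ := ⌈R⌉ with hrdef
    -- the error term tends to 0
    have herr : Tendsto (fun k : ℤ =>
        B * (1 - ((((k - 1 - 2 * r).toNat ^ m : ℕ) : ℝ)) / (k:ℝ)^m)) atTop (nhds 0) := by
      have hratio : Tendsto (fun k : ℤ => ((((k - (1 + 2 * r)).toNat : ℝ)) / (k:ℝ))^m)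
          atTop (nhds 1) := by
        have h2 := (tendsto_sub_ratio (1 + 2 * r)).pow m
        simpa using h2
      have h3 : Tendsto (fun k : ℤ =>
          B * (1 - ((((k - (1 + 2 * r)).toNat : ℝ)) / (k:ℝ))^m)) atTop (nhds 0) := by
        have h4 := ((tendsto_const_nhds (x := (1:ℝ)) (f := (atTop : Filter ℤ))).sub
          hratio).const_mul B
        simpa using h4
      apply h3.congr'
      filter_upwards [eventually_ge_atTop (1 : ℤ)] with k hk
      have hk0 : (0:ℝ) < (k:ℝ) := by exact_mod_cast hk
      have heq1 : k - (1 + 2 * r) = k - 1 - 2 * r := by ring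
      rw [heq1, div_pow]
      congr 2
      push_cast
      ring
    have hfreq : ∃ᶠ k in (atTop : Filter ℤ), f k < L + ε / 2 := by
      apply frequently_lt_of_liminf_lt hcob_ge
      rw [← hLdef]
      linarith
    have hev : ∀ᶠ k in (atTop : Filter ℤ), (2 * r + 3 ≤ k) ∧
        B * (1 - ((((k - 1 - 2 * r).toNat ^ m : ℕ) : ℝ)) / (k:ℝ)^m) < ε / 2 :=
      (eventually_ge_atTop _).and (herr.eventually_lt_const (by linarith))
    obtain ⟨k, hfk, hk2, hk3⟩ := (hfreq.and_eventually hev).exists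
    have hkpos : (0:ℤ) < k := by omega
    have hkR : (0:ℝ) < (k:ℝ) := by exact_mod_cast hkpos
    have hkRm : (0:ℝ) < (k:ℝ)^m := pow_pos hkR m
    set ckv : ℝ := (((k - 1 - 2 * r).toNat ^ m : ℕ) : ℝ) with hckvdef
    set hfk_v : ℝ := hfun m N R G z k with hfkvdef
    set ψ : ℤ → ℝ := fun n =>
      ((((n / k).toNat ^ m : ℕ) : ℝ) * hfk_v
        + B * (((((n - 1).toNat ^ m : ℕ)) : ℝ) - (((n / k).toNat ^ m : ℕ) : ℝ) * ckv))
        / (n:ℝ)^m with hψdef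
    have hfψ : ∀ᶠ n in (atTop : Filter ℤ), f n ≤ ψ n := by
      filter_upwards [eventually_ge_atTop (2 * k + 1)] with n hn
      have hn1 : (1:ℤ) ≤ n := by omega
      have hnR : (0:ℝ) < (n:ℝ) := by exact_mod_cast hn1
      have hnm : (0:ℝ) < (n:ℝ)^m := pow_pos hnR m
      have hkey := key_ineq (G := G) (z := z) hm hN hR hz hC hC0 hGper (k := k) (n := n) hk2 hn
      rw [hfdef, hψdef]
      dsimp only
      rw [div_le_div_iff_of_pos_right hnm]
      exact hkey
    have hψlim : Tendsto ψ atTop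
        (nhds ((1/(k:ℝ))^m * hfk_v + B * (1^m - (1/(k:ℝ))^m * ckv))) := by
      have T1 : Tendsto (fun n : ℤ => (((n / k).toNat : ℝ)) / (n:ℝ)) atTop (nhds (1/(k:ℝ))) :=
        tendsto_ediv_ratio hkpos
      have T2 : Tendsto (fun n : ℤ => (((n - 1).toNat : ℝ)) / (n:ℝ)) atTop (nhds 1) :=
        tendsto_sub_ratio 1
      have Full := (((T1.pow m).mul_const hfk_v).add
        ((((T2.pow m).sub ((T1.pow m).mul_const ckv))).const_mul B))
      apply Full.congr'
      filter_upwards [eventually_ge_atTop (1 : ℤ)] with n hn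
      have hnR : (0:ℝ) < (n:ℝ) := by exact_mod_cast hn
      have hnm : ((n:ℝ))^m ≠ 0 := (pow_pos hnR m).ne'
      rw [hψdef]
      dsimp only
      rw [div_pow, div_pow]
      have hc1 : ((((n / k).toNat ^ m : ℕ)) : ℝ) = (((n / k).toNat : ℝ))^m := by
        push_cast; ring
      have hc2 : ((((n - 1).toNat ^ m : ℕ)) : ℝ) = (((n - 1).toNat : ℝ))^m := by
        push_cast; ring
      rw [hc1, hc2]
      field_simp
    have hψval : (1/(k:ℝ))^m * hfk_v + B * (1^m - (1/(k:ℝ))^m * ckv)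
        = f k + B * (1 - ckv / (k:ℝ)^m) := by
      rw [hfdef]
      dsimp only
      rw [one_pow, div_pow, one_pow, ← hfkvdef]
      field_simp
    have hlimsupψ : limsup ψ atTop = f k + B * (1 - ckv / (k:ℝ)^m) := by
      rw [hψlim.limsup_eq, hψval]
    have h6 : limsup f atTop ≤ limsup ψ atTop :=
      limsup_le_limsup hfψ hcob_le hψlim.isBoundedUnder_le
    rw [hlimsupψ] at h6
    have h7 : B * (1 - ckv / (k:ℝ)^m) < ε / 2 := by
      have : ckv / (k:ℝ)^m = ckv / (k:ℝ)^m := rfl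
      exact hk3
    linarith
  refine ⟨L, tendsto_of_liminf_eq_limsup rfl ?_ hbdd_le hbdd_ge⟩
  exact le_antisymm hlimsup_le_L (liminf_le_limsup hbdd_le hbdd_ge)

end Main

theorem homogenization_formula_limit_exists
    (m N : ℕ) (hm : 1 ≤ m) (hN : 2 ≤ N) (R : ℝ) (hR : 0 < R)
    (G : (Fin m → ℤ) → (Fin m → ℤ) → EuclideanSpace ℝ (Fin N) →
      EuclideanSpace ℝ (Fin N) → ℝ)
    (hGbdd : ∃ C : ℝ, ∀ ξ β u v, |G ξ β u v| ≤ C)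
    (hGper : ∀ ξ β γ u v, G ξ (β + γ) u v = G ξ β u v)
    (z : EuclideanSpace ℝ (Fin N)) (hz : ‖z‖ < 1) :
    ∃ L : ℝ, Filter.Tendsto (fun T => gT m N R G T z) Filter.atTop (nhds L) := by
  obtain ⟨C, hC⟩ := hGbdd
  have hC0 : 0 ≤ C := le_trans (abs_nonneg _) (hC 0 0 0 0)
  obtain ⟨L, hL⟩ := seq_tendsto (G := G) (z := z) hm hN hR hz hC hC0 hGper
  refine ⟨L, ?_⟩
  have hceil : Tendsto (fun T : ℝ => ⌈T⌉) atTop atTop := by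
    refine tendsto_atTop.mpr (fun b => ?_)
    filter_upwards [eventually_ge_atTop ((b:ℝ))] with T hT
    exact_mod_cast le_trans hT (Int.le_ceil T)
  have h2 : Tendsto (fun T : ℝ => hfun m N R G z ⌈T⌉ / ((⌈T⌉:ℝ))^m) atTop (nhds L) :=
    hL.comp hceil
  have h3 : Tendsto (fun T : ℝ => (((⌈T⌉:ℤ):ℝ)/T)^m) atTop (nhds 1) := by
    have hr : Tendsto (fun T : ℝ => ((⌈T⌉:ℤ):ℝ)/T) atTop (nhds 1) := by
      have hup : Tendsto (fun T : ℝ => 1 + T⁻¹) atTop (nhds 1) := by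
        have := (tendsto_const_nhds (x := (1:ℝ)) (f := (atTop : Filter ℝ))).add
          tendsto_inv_atTop_zero
        simpa using this
      refine tendsto_of_tendsto_of_tendsto_of_le_of_le' tendsto_const_nhds hup ?_ ?_
      · filter_upwards [eventually_ge_atTop (1:ℝ)] with T hT
        have hT0 : (0:ℝ) < T := lt_of_lt_of_le one_pos hT
        rw [le_div_iff₀ hT0, one_mul]
        exact Int.le_ceil T
      · filter_upwards [eventually_ge_atTop (1:ℝ)] with T hT
        have hT0 : (0:ℝ) < T := lt_of_lt_of_le one_pos hT
        rw [div_le_iff₀ hT0]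
        have hcc := (Int.ceil_lt_add_one T).le
        have heq : (1 + T⁻¹) * T = T + 1 := by field_simp
        rw [heq]
        exact hcc
    have := hr.pow m
    simpa using this
  have hmul := h3.mul h2
  rw [one_mul] at hmul
  apply hmul.congr'
  filter_upwards [eventually_ge_atTop (1:ℝ)] with T hT
  have hT0 : (0:ℝ) < T := lt_of_lt_of_le one_pos hT
  have hclR : (0:ℝ) < ((⌈T⌉:ℤ):ℝ) := by exact_mod_cast Int.ceil_pos.mpr hT0
  rw [gT_eq m N R G z hT0]
  rw [div_pow]
  field_simp
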